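/- Let N ≥ 1 be an integer and f a real number with f ≥ 1/N, and let L = L_f be the simple Leslie matrix of order N. Let k, m, a, b be real numbers with k, m, a, b > 0, and let α, β : ℕ → ℝ^N satisfy α_{n+1} = L·α_n − k·m·β_n and β_{n+1} = L·β_n − k·α_n for all n ≥ 0, with initial conditions α_0 = a·(1, …, 1)ᵀ and β_0 = b·(1, …, 1)ᵀ. If a − √m·b > 0, then there exists n₀ such that for all n ≥ n₀, every entry of α_n is strictly positive and every entry of β_n is strictly negative (so the β-species goes extinct while the α-species grows). -/

import Mathlib

/-- The simple Leslie matrix of order `N` with constant fertility rate `f`: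
first row all `f`, subdiagonal entries `1`, all other entries `0`. -/
def leslieSimple (N : ℕ) (f : ℝ) : Matrix (Fin N) (Fin N) ℝ :=
  fun i j => if i.val = 0 then f else if i.val = j.val + 1 then 1 else 0

namespace LSS

variable {N : ℕ}

def fpred (i : Fin N) : Fin N := ⟨i.val - 1, lt_of_le_of_lt (Nat.sub_le _ _) i.isLt⟩

noncomputable def lstep (f c : ℝ) (x : Fin N → ℝ) : Fin N → ℝ :=
  fun i => (if i.val = 0 then f * ∑ j, x j else x (fpred i)) + c * x i

lemma mulVec_apply (f : ℝ) (x : Fin N → ℝ) (i : Fin N) :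
    (leslieSimple N f).mulVec x i
      = if i.val = 0 then f * ∑ j, x j else x (fpred i) := by
  unfold leslieSimple Matrix.mulVec dotProduct
  by_cases h : i.val = 0
  · simp [h, Finset.mul_sum]
  · simp only [h, if_false]
    rw [Finset.sum_eq_single (fpred i)]
    · have h2 : i.val = (fpred i).val + 1 := by simp only [fpred]; omega
      rw [if_pos h2, one_mul]
    · intro j _ hj
      have h3 : ¬ (i.val = j.val + 1) := by
        intro hh; apply hj; apply Fin.ext; simp only [fpred]; omega
      rw [if_neg h3, zero_mul]
    · intro hm; exact absurd (Finset.mem_univ _) hm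

lemma pos_step (f c : ℝ) (hf : 0 < f) (hc : 0 < c) (x : Fin N → ℝ)
    (hx : ∀ i, 0 < x i) (i : Fin N) : 0 < lstep f c x i := by
  unfold lstep
  have h1 : 0 < c * x i := mul_pos hc (hx i)
  by_cases h : i.val = 0
  · rw [if_pos h]
    have : 0 < ∑ j, x j := Finset.sum_pos (fun j _ => hx j) ⟨i, Finset.mem_univ i⟩
    positivity
  · rw [if_neg h]; exact add_pos (hx _) h1

lemma le_sum (x : Fin N → ℝ) (hx : ∀ i, 0 ≤ x i) (i : Fin N) : x i ≤ ∑ j, x j :=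
  Finset.single_le_sum (fun j _ => hx j) (Finset.mem_univ i)

lemma sum_step (f c : ℝ) (hf : 0 < f) (hc : 0 < c) (x : Fin N → ℝ)
    (hx : ∀ i, 0 ≤ x i) :
    ∑ i, lstep f c x i ≤ (1 + f + c) * ∑ i, x i := by
  unfold lstep
  rw [Finset.sum_add_distrib]
  have h2 : ∑ i : Fin N, c * x i = c * ∑ i, x i := by rw [Finset.mul_sum]
  rw [h2]
  have h3 : ∑ i : Fin N, (if i.val = 0 then f * ∑ j, x j else x (fpred i))
      ≤ (f + 1) * ∑ i, x i := by
    classical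
    by_cases hN : N = 0
    · subst hN; simp
    · have h0 : (0 : ℕ) < N := Nat.pos_of_ne_zero hN
      let z : Fin N := ⟨0, h0⟩
      rw [← Finset.sum_erase_add _ _ (Finset.mem_univ z)]
      have hz : (z : Fin N).val = 0 := rfl
      rw [if_pos hz]
      have h4 : ∑ i ∈ Finset.univ.erase z, (if i.val = 0 then f * ∑ j, x j else x (fpred i))
          = ∑ i ∈ Finset.univ.erase z, x (fpred i) := by
        apply Finset.sum_congr rfl
        intro i hi
        have : i.val ≠ 0 := by
          intro hh
          exact (Finset.mem_erase.mp hi).1 (Fin.ext hh)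
        rw [if_neg this]
      rw [h4]
      have h5 : ∑ i ∈ Finset.univ.erase z, x (fpred i) ≤ ∑ j, x j := by
        have hinj : ∀ i ∈ Finset.univ.erase z, ∀ j ∈ Finset.univ.erase z,
            fpred i = fpred j → i = j := by
          intro i hi j hj hij
          have hi' : i.val ≠ 0 := fun hh => (Finset.mem_erase.mp hi).1 (Fin.ext hh)
          have hj' : j.val ≠ 0 := fun hh => (Finset.mem_erase.mp hj).1 (Fin.ext hh)
          have : (fpred i).val = (fpred j).val := congrArg Fin.val hij
          simp only [fpred] at this
          apply Fin.ext; omega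
        calc ∑ i ∈ Finset.univ.erase z, x (fpred i)
            = ∑ j ∈ (Finset.univ.erase z).image fpred, x j := (Finset.sum_image hinj).symm
          _ ≤ ∑ j, x j := by
              apply Finset.sum_le_sum_of_subset_of_nonneg (Finset.subset_univ _)
              intro j _ _; exact hx j
      have hs : 0 ≤ ∑ j, x j := Finset.sum_nonneg (fun j _ => hx j)
      nlinarith
  linarith


lemma row0_bound (f c : ℝ) (hf : 0 < f) (hc : 0 < c) (ε : ℝ) (hε : 0 ≤ ε)
    (x y : Fin N → ℝ) (hy : ∀ i, 0 ≤ y i) (hxy : ∀ j, |x j| ≤ ε * y j)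
    (i : Fin N) (hi : i.val = 0) :
    |lstep f (-c) x i| + ε * (2 * min f c) * y i ≤ ε * lstep f c y i := by
  classical
  unfold lstep
  rw [if_pos hi, if_pos hi]
  have key : |f * ∑ j, x j + -c * x i|
      ≤ f * (∑ j ∈ Finset.univ.erase i, |x j|) + |f - c| * |x i| := by
    have hsplit : f * ∑ j, x j + -c * x i
        = f * (∑ j ∈ Finset.univ.erase i, x j) + (f - c) * x i := by
      rw [← Finset.sum_erase_add _ _ (Finset.mem_univ i)]; ring
    rw [hsplit]
    calc |f * (∑ j ∈ Finset.univ.erase i, x j) + (f - c) * x i|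
        ≤ |f * (∑ j ∈ Finset.univ.erase i, x j)| + |(f - c) * x i| := abs_add_le _ _
      _ = f * |∑ j ∈ Finset.univ.erase i, x j| + |f - c| * |x i| := by
          rw [abs_mul, abs_mul, abs_of_pos hf]
      _ ≤ f * (∑ j ∈ Finset.univ.erase i, |x j|) + |f - c| * |x i| := by
          have := Finset.abs_sum_le_sum_abs x (Finset.univ.erase i)
          nlinarith
  have h1 : ∑ j ∈ Finset.univ.erase i, |x j| ≤ ε * (∑ j, y j) - ε * y i := by
    have : ∑ j ∈ Finset.univ.erase i, |x j| ≤ ∑ j ∈ Finset.univ.erase i, ε * y j :=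
      Finset.sum_le_sum (fun j _ => hxy j)
    have h2 : ∑ j ∈ Finset.univ.erase i, ε * y j = ε * (∑ j, y j) - ε * y i := by
      rw [← Finset.mul_sum, ← Finset.sum_erase_add _ _ (Finset.mem_univ i)]; ring
    linarith
  have h3 : |x i| ≤ ε * y i := hxy i
  have habs : 0 ≤ |f - c| := abs_nonneg _
  have hmin : f + c - |f - c| = 2 * min f c := by
    rcases le_total f c with h | h
    · rw [abs_of_nonpos (by linarith), min_eq_left h]; ring
    · rw [abs_of_nonneg (by linarith), min_eq_right h]; ring
  nlinarith [hy i, mul_nonneg hε (hy i)]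

lemma rowi_bound (f c : ℝ) (hc : 0 < c) (ε σ : ℝ)
    (x y : Fin N → ℝ) (i : Fin N) (hi : ¬ i.val = 0)
    (hslack : |x (fpred i)| + σ ≤ ε * y (fpred i)) (hci : |x i| ≤ ε * y i) :
    |lstep f (-c) x i| + σ ≤ ε * lstep f c y i := by
  unfold lstep
  rw [if_neg hi, if_neg hi]
  have h1 : |x (fpred i) + -c * x i| ≤ |x (fpred i)| + c * |x i| := by
    calc |x (fpred i) + -c * x i| ≤ |x (fpred i)| + |(-c) * x i| := abs_add_le _ _
      _ = |x (fpred i)| + c * |x i| := by rw [abs_mul, abs_neg, abs_of_pos hc]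
  nlinarith [abs_nonneg (x i)]


lemma window (f c : ℝ) (hf : 0 < f) (hc : 0 < c) (ε : ℝ) (hε : 0 ≤ ε)
    (D S : ℕ → Fin N → ℝ)
    (hD : ∀ n, D (n+1) = lstep f c (D n))
    (hS : ∀ n, S (n+1) = lstep f (-c) (S n))
    (hDpos : ∀ n i, 0 < D n i)
    (i0 : Fin N) (hi0 : i0.val = 0)
    (n : ℕ) (h : ∀ i, |S n i| ≤ ε * D n i) :
    ∀ t, (∀ i, |S (n+t) i| ≤ ε * D (n+t) i) ∧
      (∀ i : Fin N, i.val < t →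
        |S (n+t) i| + ε * (2 * min f c) * D (n + (t - i.val - 1)) i0 ≤ ε * D (n+t) i) := by
  intro t
  induction t with
  | zero => exact ⟨h, fun i hi => absurd hi (by omega)⟩
  | succ t IH =>
    obtain ⟨IH1, IH2⟩ := IH
    have e1 : n + (t+1) = (n+t) + 1 := rfl
    have hSt : S (n + (t+1)) = lstep f (-c) (S (n+t)) := by rw [e1, hS]
    have hDt : D (n + (t+1)) = lstep f c (D (n+t)) := by rw [e1, hD]
    have hμ : 0 < 2 * min f c := by
      have := lt_min hf hc; positivity
    constructor
    · intro i
      rw [hSt, hDt]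
      by_cases hi : i.val = 0
      · have := row0_bound f c hf hc ε hε (S (n+t)) (D (n+t))
          (fun j => (hDpos (n+t) j).le) IH1 i hi
        have h0 : 0 ≤ ε * (2 * min f c) * D (n+t) i :=
          mul_nonneg (mul_nonneg hε hμ.le) (hDpos (n+t) i).le
        linarith
      · have := rowi_bound f c hc ε 0 (S (n+t)) (D (n+t)) i hi
          (by rw [add_zero]; exact IH1 _) (IH1 i)
        linarith
    · intro i hit
      by_cases hi : i.val = 0
      · have hii0 : i = i0 := Fin.ext (by omega)
        subst hii0
        have e2 : n + (t + 1 - i.val - 1) = n + t := by omega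
        rw [hSt, hDt, e2]
        exact row0_bound f c hf hc ε hε (S (n+t)) (D (n+t))
          (fun j => (hDpos (n+t) j).le) IH1 i hi
      · have hfp : (fpred i).val < t := by simp only [fpred]; omega
        have hsl := IH2 (fpred i) hfp
        have e3 : n + (t - (fpred i).val - 1) = n + (t + 1 - i.val - 1) := by
          simp only [fpred]; omega
        rw [e3] at hsl
        rw [hSt, hDt]
        exact rowi_bound f c hc ε _ (S (n+t)) (D (n+t)) i hi hsl (IH1 i)

lemma Tgrow (f c : ℝ) (hf : 0 < f) (hc : 0 < c)
    (D : ℕ → Fin N → ℝ) (hD : ∀ n, D (n+1) = lstep f c (D n))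
    (hDpos : ∀ n i, 0 < D n i) :
    ∀ m r, (∑ i, D (m+r) i) ≤ (1+f+c)^r * ∑ i, D m i := by
  intro m r
  induction r with
  | zero => simp
  | succ r IH =>
    have e1 : m + (r+1) = (m+r) + 1 := rfl
    have hK : (0:ℝ) < 1+f+c := by linarith
    calc ∑ i, D (m+(r+1)) i = ∑ i, lstep f c (D (m+r)) i := by rw [e1, hD]
      _ ≤ (1+f+c) * ∑ i, D (m+r) i :=
          sum_step f c hf hc _ (fun i => (hDpos _ i).le)
      _ ≤ (1+f+c) * ((1+f+c)^r * ∑ i, D m i) := by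
          exact mul_le_mul_of_nonneg_left IH hK.le
      _ = (1+f+c)^(r+1) * ∑ i, D m i := by ring

lemma D0ge (f c : ℝ) (hf : 0 < f) (hc : 0 < c) (hN : 0 < N)
    (D : ℕ → Fin N → ℝ) (hD : ∀ n, D (n+1) = lstep f c (D n))
    (hDpos : ∀ n i, 0 < D n i)
    (i0 : Fin N) (hi0 : i0.val = 0)
    (hconst : ∀ i, D 0 i = D 0 i0) :
    ∀ n, min (1/(N:ℝ)) (f/(1+f+c)) * (∑ i, D n i) ≤ D n i0 := by
  have hK : (0:ℝ) < 1+f+c := by linarith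
  have hNR : (0:ℝ) < (N:ℝ) := Nat.cast_pos.mpr hN
  intro n
  cases n with
  | zero =>
    have hsum : ∑ i, D 0 i = (N:ℝ) * D 0 i0 := by
      rw [Finset.sum_congr rfl (fun i _ => hconst i)]
      simp [Finset.card_univ, mul_comm]
    rw [hsum]
    have h1 : min (1/(N:ℝ)) (f/(1+f+c)) ≤ 1/(N:ℝ) := min_le_left _ _
    have h2 : 0 < D 0 i0 := hDpos 0 i0
    have h3 : (1/(N:ℝ)) * ((N:ℝ) * D 0 i0) = D 0 i0 := by field_simp
    nlinarith [mul_le_mul_of_nonneg_right h1 (by positivity : (0:ℝ) ≤ (N:ℝ) * D 0 i0)]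
  | succ n =>
    have h1 : f * ∑ i, D n i ≤ D (n+1) i0 := by
      rw [hD n]
      unfold lstep
      rw [if_pos hi0]
      nlinarith [hDpos n i0]
    have h2 : ∑ i, D (n+1) i ≤ (1+f+c) * ∑ i, D n i := by
      have := Tgrow f c hf hc D hD hDpos n 1
      simpa using this
    have h3 : min (1/(N:ℝ)) (f/(1+f+c)) ≤ f/(1+f+c) := min_le_right _ _
    have h4 : 0 ≤ ∑ i, D (n+1) i :=
      Finset.sum_nonneg (fun i _ => (hDpos (n+1) i).le)
    have h5 : min (1/(N:ℝ)) (f/(1+f+c)) * (∑ i, D (n+1) i)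
        ≤ (f/(1+f+c)) * (∑ i, D (n+1) i) := mul_le_mul_of_nonneg_right h3 h4
    have h6 : (f/(1+f+c)) * (∑ i, D (n+1) i) ≤ (f/(1+f+c)) * ((1+f+c) * ∑ i, D n i) := by
      apply mul_le_mul_of_nonneg_left h2 (by positivity)
    have h7 : (f/(1+f+c)) * ((1+f+c) * ∑ i, D n i) = f * ∑ i, D n i := by
      field_simp
    linarith


lemma contract (f c : ℝ) (hf : 0 < f) (hc : 0 < c) (hN : 0 < N)
    (ε : ℝ) (hε : 0 ≤ ε)
    (D S : ℕ → Fin N → ℝ)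
    (hD : ∀ n, D (n+1) = lstep f c (D n))
    (hS : ∀ n, S (n+1) = lstep f (-c) (S n))
    (hDpos : ∀ n i, 0 < D n i)
    (i0 : Fin N) (hi0 : i0.val = 0)
    (hconst : ∀ i, D 0 i = D 0 i0)
    (n : ℕ) (h : ∀ i, |S n i| ≤ ε * D n i) :
    ∀ i, |S (n+N) i| ≤
      ε * (1 - (2 * min f c) * (min (1/(N:ℝ)) (f/(1+f+c))) / (1+f+c)^N) * D (n+N) i := by
  intro i
  set μ := 2 * min f c with hμdef
  set γ := min (1/(N:ℝ)) (f/(1+f+c)) with hγdef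
  set K := 1+f+c with hKdef
  have hKpos : (0:ℝ) < K := by rw [hKdef]; linarith
  have hK1 : (1:ℝ) ≤ K := by rw [hKdef]; linarith
  have hKN : (0:ℝ) < K^N := pow_pos hKpos N
  have hμpos : 0 < μ := by have := lt_min hf hc; rw [hμdef]; positivity
  have hγpos : 0 < γ := by
    have hNR : (0:ℝ) < (N:ℝ) := Nat.cast_pos.mpr hN
    rw [hγdef]; apply lt_min (by positivity) (by positivity)
  -- slack from window at t = N
  have hw := (window f c hf hc ε hε D S hD hS hDpos i0 hi0 n h N).2 i i.isLt
  set r := N - i.val - 1 with hrdef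
  -- sum growth over the rest of the window
  have hgrow := Tgrow f c hf hc D hD hDpos (n+r) (i.val+1)
  have e1 : n + r + (i.val + 1) = n + N := by
    have := i.isLt; omega
  rw [e1] at hgrow
  have hpowle : K^(i.val+1) ≤ K^N := pow_le_pow_right₀ hK1 (by have := i.isLt; omega)
  have hsum : 0 ≤ ∑ j, D (n+r) j := Finset.sum_nonneg (fun j _ => (hDpos _ j).le)
  have hDle : D (n+N) i ≤ K^N * ∑ j, D (n+r) j := by
    calc D (n+N) i ≤ ∑ j, D (n+N) j := le_sum _ (fun j => (hDpos _ j).le) i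
      _ ≤ K^(i.val+1) * ∑ j, D (n+r) j := hgrow
      _ ≤ K^N * ∑ j, D (n+r) j := mul_le_mul_of_nonneg_right hpowle hsum
  have hD0 : γ * (∑ j, D (n+r) j) ≤ D (n+r) i0 :=
    D0ge f c hf hc hN D hD hDpos i0 hi0 hconst (n+r)
  -- combine
  have hdiv : D (n+N) i / K^N ≤ ∑ j, D (n+r) j := by
    rw [div_le_iff₀ hKN]; nlinarith
  have hchain : γ * (D (n+N) i / K^N) ≤ D (n+r) i0 := by
    have := mul_le_mul_of_nonneg_left hdiv hγpos.le
    linarith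
  have hslack : ε * μ * (γ * (D (n+N) i / K^N)) ≤ ε * μ * D (n+r) i0 :=
    mul_le_mul_of_nonneg_left hchain (by positivity)
  have hgoal : ε * (1 - μ * γ / K^N) * D (n+N) i
      = ε * D (n+N) i - ε * μ * (γ * (D (n+N) i / K^N)) := by ring
  rw [hgoal]
  have hw' : |S (n+N) i| + ε * μ * D (n+r) i0 ≤ ε * D (n+N) i := hw
  linarith

lemma theta_bounds (f c : ℝ) (hf : 0 < f) (hc : 0 < c) (hN : 0 < N) :
    0 ≤ 1 - (2 * min f c) * (min (1/(N:ℝ)) (f/(1+f+c))) / (1+f+c)^N ∧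
    1 - (2 * min f c) * (min (1/(N:ℝ)) (f/(1+f+c))) / (1+f+c)^N < 1 := by
  set μ := 2 * min f c with hμdef
  set γ := min (1/(N:ℝ)) (f/(1+f+c)) with hγdef
  set K := 1+f+c with hKdef
  have hKpos : (0:ℝ) < K := by rw [hKdef]; linarith
  have hK1 : (1:ℝ) ≤ K := by rw [hKdef]; linarith
  have hKN : (0:ℝ) < K^N := pow_pos hKpos N
  have hμpos : 0 < μ := by have := lt_min hf hc; rw [hμdef]; positivity
  have hNR : (0:ℝ) < (N:ℝ) := Nat.cast_pos.mpr hN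
  have hγpos : 0 < γ := by
    rw [hγdef]; apply lt_min (by positivity) (by positivity)
  constructor
  · have hμ2c : μ ≤ 2 * c := by
      rw [hμdef]
      have : min f c ≤ c := min_le_right _ _
      linarith
    have hγK : γ * K ≤ f := by
      have h1 : γ ≤ f / K := by rw [hγdef]; exact min_le_right _ _
      calc γ * K ≤ (f/K) * K := mul_le_mul_of_nonneg_right h1 hKpos.le
        _ = f := by field_simp
    have hKle : K ≤ K^N := le_self_pow₀ (by linarith) (by omega)
    have h4cf : 4 * c * f ≤ K^2 := by rw [hKdef]; nlinarith [sq_nonneg (f - c), sq_nonneg (1 + f + c)]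
    have key : 2 * (μ * γ) ≤ K^N := by
      have h5 : 2 * (μ * γ) * K ≤ 4 * c * f := by nlinarith
      have h6 : K^2 ≤ K * K^N := by nlinarith
      nlinarith
    have : μ * γ / K^N ≤ 1/2 := by
      rw [div_le_iff₀ hKN]; linarith
    linarith
  · have : 0 < μ * γ / K^N := by positivity
    linarith

lemma iterate_contract (f c : ℝ) (hf : 0 < f) (hc : 0 < c) (hN : 0 < N)
    (ε₀ : ℝ) (hε₀ : 0 ≤ ε₀)
    (D S : ℕ → Fin N → ℝ)
    (hD : ∀ n, D (n+1) = lstep f c (D n))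
    (hS : ∀ n, S (n+1) = lstep f (-c) (S n))
    (hDpos : ∀ n i, 0 < D n i)
    (i0 : Fin N) (hi0 : i0.val = 0)
    (hconst : ∀ i, D 0 i = D 0 i0)
    (h0 : ∀ i, |S 0 i| ≤ ε₀ * D 0 i) :
    ∀ j i, |S (N*j) i| ≤
      ε₀ * (1 - (2 * min f c) * (min (1/(N:ℝ)) (f/(1+f+c))) / (1+f+c)^N)^j * D (N*j) i := by
  intro j
  induction j with
  | zero => simpa using h0
  | succ j IH =>
    set θ := 1 - (2 * min f c) * (min (1/(N:ℝ)) (f/(1+f+c))) / (1+f+c)^N with hθdef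
    have hθ0 : 0 ≤ θ := (theta_bounds f c hf hc hN).1
    have hεj : 0 ≤ ε₀ * θ^j := by positivity
    have hcon := contract f c hf hc hN (ε₀ * θ^j) hεj D S hD hS hDpos i0 hi0 hconst (N*j) IH
    intro i
    have e1 : N * j + N = N * (j+1) := by ring
    rw [e1] at hcon
    have := hcon i
    calc |S (N*(j+1)) i| ≤ ε₀ * θ^j * θ * D (N*(j+1)) i := this
      _ = ε₀ * θ^(j+1) * D (N*(j+1)) i := by ring

end LSS

/-- Last Species Standing (linear competitive model): with `L = L_f`, `f ≥ 1/N`,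
`k, m, a, b > 0`, dynamics `α_{n+1} = L·α_n - k·m·β_n`, `β_{n+1} = L·β_n - k·α_n` and
constant initial vectors `α_0 = a·(1,…,1)ᵀ`, `β_0 = b·(1,…,1)ᵀ`: if `a - √m·b > 0`,
then eventually every entry of `α_n` is strictly positive and every entry of `β_n` is
strictly negative (the β-species goes extinct while the α-species grows). -/
theorem last_species_standing (N : ℕ) (hN : 1 ≤ N) (f : ℝ) (hf : 1 / (N : ℝ) ≤ f)
    (k m a b : ℝ) (hk : 0 < k) (hm : 0 < m) (ha : 0 < a) (hb : 0 < b)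
    (α β : ℕ → Fin N → ℝ)
    (hα : ∀ n, α (n + 1) = (leslieSimple N f).mulVec (α n) - (k * m) • β n)
    (hβ : ∀ n, β (n + 1) = (leslieSimple N f).mulVec (β n) - k • α n)
    (hα0 : α 0 = fun _ => a) (hβ0 : β 0 = fun _ => b)
    (hD : 0 < a - Real.sqrt m * b) :
    ∃ n₀ : ℕ, ∀ n ≥ n₀, (∀ i, 0 < α n i) ∧ (∀ i, β n i < 0) := by
  have hN0 : 0 < N := hN
  have hNR : (0:ℝ) < (N:ℝ) := Nat.cast_pos.mpr hN0
  have hf0 : 0 < f := lt_of_lt_of_le (by positivity) hf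
  have hsm0 : 0 < Real.sqrt m := Real.sqrt_pos.mpr hm
  have hsq : Real.sqrt m * Real.sqrt m = m := Real.mul_self_sqrt hm.le
  set c := k * Real.sqrt m with hcdef
  have hc : 0 < c := mul_pos hk hsm0
  set DD : ℕ → Fin N → ℝ := fun n i => α n i - Real.sqrt m * β n i with hDDdef
  set SS : ℕ → Fin N → ℝ := fun n i => α n i + Real.sqrt m * β n i with hSSdef
  let i0 : Fin N := ⟨0, hN0⟩
  have hi0 : (i0 : Fin N).val = 0 := rfl
  have hsplit : ∀ n, ∑ j, (α n j - Real.sqrt m * β n j)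
      = ∑ j, α n j - Real.sqrt m * ∑ j, β n j := by
    intro n; rw [Finset.sum_sub_distrib, Finset.mul_sum]
  have hsplit' : ∀ n, ∑ j, (α n j + Real.sqrt m * β n j)
      = ∑ j, α n j + Real.sqrt m * ∑ j, β n j := by
    intro n; rw [Finset.sum_add_distrib, Finset.mul_sum]
  have hDDrec : ∀ n, DD (n+1) = LSS.lstep f c (DD n) := by
    intro n; funext i
    show α (n+1) i - Real.sqrt m * β (n+1) i = LSS.lstep f c (DD n) i
    rw [hα n, hβ n]
    simp only [LSS.lstep, hDDdef, Pi.sub_apply, Pi.smul_apply, smul_eq_mul,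
      LSS.mulVec_apply]
    by_cases hi : (i : ℕ) = 0
    · rw [if_pos hi, if_pos hi, if_pos hi, hsplit n]
      linear_combination (k * β n i) * hsq
    · rw [if_neg hi, if_neg hi, if_neg hi]
      linear_combination (k * β n i) * hsq
  have hSSrec : ∀ n, SS (n+1) = LSS.lstep f (-c) (SS n) := by
    intro n; funext i
    show α (n+1) i + Real.sqrt m * β (n+1) i = LSS.lstep f (-c) (SS n) i
    rw [hα n, hβ n]
    simp only [LSS.lstep, hSSdef, Pi.sub_apply, Pi.smul_apply, smul_eq_mul,
      LSS.mulVec_apply]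
    by_cases hi : (i : ℕ) = 0
    · rw [if_pos hi, if_pos hi, if_pos hi, hsplit' n]
      linear_combination (k * β n i) * hsq
    · rw [if_neg hi, if_neg hi, if_neg hi]
      linear_combination (k * β n i) * hsq
  have hDD0 : ∀ i, DD 0 i = a - Real.sqrt m * b := by
    intro i; show α 0 i - Real.sqrt m * β 0 i = _; rw [hα0, hβ0]
  have hDDpos : ∀ n i, 0 < DD n i := by
    intro n
    induction n with
    | zero => intro i; rw [hDD0 i]; exact hD
    | succ n IH =>
      intro i; rw [hDDrec n]
      exact LSS.pos_step f c hf0 hc _ IH i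
  have hconst : ∀ i, DD 0 i = DD 0 i0 := by
    intro i; rw [hDD0, hDD0]
  set d := a - Real.sqrt m * b with hddef
  set s := a + Real.sqrt m * b with hsdef
  have hd : 0 < d := hD
  have hs : 0 < s := by rw [hsdef]; positivity
  have h0 : ∀ i, |SS 0 i| ≤ (s/d) * DD 0 i := by
    intro i
    have h1 : SS 0 i = s := by show α 0 i + Real.sqrt m * β 0 i = s; rw [hα0, hβ0]
    rw [h1, hDD0 i, abs_of_pos hs, div_mul_cancel₀ _ (ne_of_gt hd)]
  have hiter := LSS.iterate_contract f c hf0 hc hN0 (s/d) (by positivity)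
    DD SS hDDrec hSSrec hDDpos i0 hi0 hconst h0
  obtain ⟨hθ0, hθ1⟩ := LSS.theta_bounds f c hf0 hc hN0 (N := N)
  set θ := 1 - (2 * min f c) * (min (1/(N:ℝ)) (f/(1+f+c))) / (1+f+c)^N with hθdef
  obtain ⟨j, hj⟩ : ∃ j : ℕ, θ^j < d/s := exists_pow_lt_of_lt_one (by positivity) hθ1
  have key : ∀ i, |SS (N*j) i| < DD (N*j) i := by
    intro i
    have h1 := hiter j i
    have h2 : (s/d) * θ^j < 1 := by
      have h3 : (s/d) * θ^j < (s/d) * (d/s) := by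
        apply mul_lt_mul_of_pos_left hj (by positivity)
      have h4 : (s/d) * (d/s) = 1 := by field_simp
      linarith
    have h5 := mul_lt_mul_of_pos_right h2 (hDDpos (N*j) i)
    rw [one_mul] at h5
    exact lt_of_le_of_lt h1 h5
  have hα1 : ∀ i, 0 < α (N*j) i := by
    intro i
    obtain ⟨hl, hr⟩ := abs_lt.mp (key i)
    have e1 : SS (N*j) i = α (N*j) i + Real.sqrt m * β (N*j) i := rfl
    have e2 : DD (N*j) i = α (N*j) i - Real.sqrt m * β (N*j) i := rfl
    linarith
  have hβ1 : ∀ i, β (N*j) i < 0 := by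
    intro i
    obtain ⟨hl, hr⟩ := abs_lt.mp (key i)
    have e1 : SS (N*j) i = α (N*j) i + Real.sqrt m * β (N*j) i := rfl
    have e2 : DD (N*j) i = α (N*j) i - Real.sqrt m * β (N*j) i := rfl
    have h3 : Real.sqrt m * β (N*j) i < 0 := by linarith
    by_contra hge
    push_neg at hge
    have := mul_nonneg hsm0.le hge
    linarith
  have hinv : ∀ p, (∀ i, 0 < α ((N*j)+p) i) ∧ (∀ i, β ((N*j)+p) i < 0) := by
    intro p
    induction p with
    | zero => exact ⟨hα1, hβ1⟩
    | succ p IH =>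
      obtain ⟨IH1, IH2⟩ := IH
      have e : (N*j) + (p+1) = ((N*j)+p) + 1 := rfl
      have hkm : 0 < k * m := mul_pos hk hm
      constructor
      · intro i
        rw [e, hα ((N*j)+p)]
        simp only [Pi.sub_apply, Pi.smul_apply, smul_eq_mul, LSS.mulVec_apply]
        have hL : 0 < (if (i:ℕ) = 0 then f * ∑ l, α ((N*j)+p) l else α ((N*j)+p) (LSS.fpred i)) := by
          by_cases hi : (i:ℕ) = 0
          · rw [if_pos hi]
            have : 0 < ∑ l, α ((N*j)+p) l :=
              Finset.sum_pos (fun l _ => IH1 l) ⟨i, Finset.mem_univ i⟩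
            positivity
          · rw [if_neg hi]; exact IH1 _
        have hb2 := IH2 i
        nlinarith
      · intro i
        rw [e, hβ ((N*j)+p)]
        simp only [Pi.sub_apply, Pi.smul_apply, smul_eq_mul, LSS.mulVec_apply]
        have hL : (if (i:ℕ) = 0 then f * ∑ l, β ((N*j)+p) l else β ((N*j)+p) (LSS.fpred i)) < 0 := by
          by_cases hi : (i:ℕ) = 0
          · rw [if_pos hi]
            have hsumneg : ∑ l, β ((N*j)+p) l < 0 :=
              Finset.sum_neg (fun l _ => IH2 l) ⟨i0, Finset.mem_univ i0⟩
            exact mul_neg_of_pos_of_neg hf0 hsumneg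
          · rw [if_neg hi]; exact IH2 _
        have ha2 := IH1 i
        nlinarith
  refine ⟨(N*j), fun n hn => ?_⟩
  obtain ⟨p, rfl⟩ := Nat.exists_eq_add_of_le hn
  exact hinv p
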